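/- arXiv:1801.03789 — 4 statements merged into one kernel-verified Lean document; each statement's English description precedes it below -/
import Mathlib

section
/- Let x : ℝ → ℝⁿ solve x'(t) = A(t)x(t) with A(t) Metzler and x(0) ≥ 0, and let ζ : [0,T] → ℝⁿ be differentiable with ζ(0) > 0 (componentwise) and ζ'(τ)ᵀ + ζ(τ)ᵀA(τ) ≤ 0 componentwise. Then the function V(τ) := ζ(τ)ᵀ x(τ) is nonincreasing on [0,T]. -/
open Set Filter

/-- Positivity of the flow of a Metzler linear ODE. -/
lemma xnonneg {n : ℕ} (T : ℝ)
    (A : ℝ → Matrix (Fin n) (Fin n) ℝ)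
    (hAcont : ∀ i j, Continuous fun τ => A τ i j)
    (hMetzler : ∀ τ, ∀ i j, i ≠ j → 0 ≤ A τ i j)
    (x : ℝ → Fin n → ℝ)
    (hxode : ∀ t ∈ Set.Icc (0 : ℝ) T, ∀ i,
      HasDerivAt (fun s => x s i) ((A t).mulVec (x t) i) t)
    (hx0 : ∀ i, 0 ≤ x 0 i) :
    ∀ t ∈ Set.Icc (0 : ℝ) T, ∀ i, 0 ≤ x t i := by
  intro t ht i
  haveI : Nonempty (Fin n) := ⟨i⟩
  -- bound on row sums
  have hgcont : Continuous fun s => ∑ p : Fin n, |∑ j, A s p j| := by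
    refine continuous_finset_sum _ fun p _ => ?_
    exact (continuous_finset_sum _ fun j _ => hAcont p j).abs
  obtain ⟨C, hC⟩ := (isCompact_Icc (a := (0:ℝ)) (b := T)).exists_bound_of_continuousOn
    hgcont.continuousOn
  set K : ℝ := C + 1 with hK
  have hrow : ∀ s ∈ Set.Icc (0:ℝ) T, ∀ p, ∑ j, A s p j ≤ K - 1 := by
    intro s hs p
    have h1 : ∑ j, A s p j ≤ |∑ j, A s p j| := le_abs_self _
    have h2 : |∑ j, A s p j| ≤ ∑ q : Fin n, |∑ j, A s q j| :=
      Finset.single_le_sum (f := fun q => |∑ j, A s q j|) (fun q _ => abs_nonneg _)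
        (Finset.mem_univ p)
    have h3 := hC s hs
    rw [Real.norm_eq_abs, abs_of_nonneg (Finset.sum_nonneg fun q _ => abs_nonneg _)] at h3
    simp only [hK]
    linarith
  -- main claim with perturbation
  have main : ∀ ε : ℝ, 0 < ε → ∀ s ∈ Set.Icc (0:ℝ) T, ∀ j, 0 < x s j + ε * Real.exp (K * s) := by
    intro ε hε
    by_contra hcon
    push_neg at hcon
    obtain ⟨s₁, hs₁, j₁, hj₁⟩ := hcon
    set w : ℝ → Fin n → ℝ := fun s j => x s j + ε * Real.exp (K * s) with hw
    have hwc : ∀ j, ContinuousOn (fun s => w s j) (Set.Icc (0:ℝ) T) := by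
      intro j s hs
      exact ((hxode s hs j).continuousAt.add
        ((Real.continuous_exp.comp (continuous_const.mul continuous_id)).continuousAt.const_mul
          ε)).continuousWithinAt
    set S : Set ℝ := ⋃ j : Fin n, (Set.Icc (0:ℝ) T ∩ {s | w s j ≤ 0}) with hS
    have hSsub : S ⊆ Set.Icc (0:ℝ) T := by
      intro s hs; obtain ⟨j, hj⟩ := Set.mem_iUnion.1 hs; exact hj.1
    have hSclosed : IsClosed S := by
      refine isClosed_iUnion_of_finite fun j => ?_
      exact (hwc j).preimage_isClosed_of_isClosed isClosed_Icc isClosed_Iic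
    have hSne : S.Nonempty := ⟨s₁, Set.mem_iUnion.2 ⟨j₁, hs₁, hj₁⟩⟩
    have hSbdd : BddBelow S := ⟨0, fun s hs => (hSsub hs).1⟩
    set t₀ : ℝ := sInf S with ht₀def
    have ht₀mem : t₀ ∈ S := hSclosed.csInf_mem hSne hSbdd
    obtain ⟨i₀, ht₀Icc, ht₀le⟩ := Set.mem_iUnion.1 ht₀mem
    have ht₀pos : 0 < t₀ := by
      rcases lt_or_eq_of_le ht₀Icc.1 with h | h
      · exact h
      · exfalso
        have h1 : w 0 i₀ ≤ 0 := by
          have h2 : w t₀ i₀ ≤ 0 := ht₀le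
          rwa [← h] at h2
        have h2 : 0 < w 0 i₀ := by
          simp only [hw, mul_zero, Real.exp_zero, mul_one]
          have := hx0 i₀; linarith
        linarith
    have hbefore : ∀ s ∈ Set.Icc (0:ℝ) T, s < t₀ → ∀ j, 0 < w s j := by
      intro s hs hst j
      by_contra h
      push_neg at h
      have : s ∈ S := Set.mem_iUnion.2 ⟨j, hs, h⟩
      exact absurd (csInf_le hSbdd this) (not_le.2 hst)
    have hIoosub : Set.Ioo 0 t₀ ⊆ Set.Icc (0:ℝ) T :=
      fun s hs => ⟨le_of_lt hs.1, le_trans (le_of_lt hs.2) ht₀Icc.2⟩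
    have hne : (nhdsWithin t₀ (Set.Ioo 0 t₀)).NeBot := by
      rw [← mem_closure_iff_nhdsWithin_neBot, closure_Ioo (ne_of_lt ht₀pos)]
      exact ⟨le_of_lt ht₀pos, le_rfl⟩
    have ht₀nonneg : ∀ j, 0 ≤ w t₀ j := by
      intro j
      have htend : Tendsto (fun s => w s j) (nhdsWithin t₀ (Set.Ioo 0 t₀)) (nhds (w t₀ j)) :=
        ((hwc j) t₀ ht₀Icc).tendsto.mono_left (nhdsWithin_mono _ hIoosub)
      refine ge_of_tendsto htend ?_
      filter_upwards [eventually_mem_nhdsWithin] with s hs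
      exact le_of_lt (hbefore s (hIoosub hs) hs.2 j)
    have ht₀eq : w t₀ i₀ = 0 := le_antisymm ht₀le (ht₀nonneg i₀)
    -- derivative of w at t₀
    have hexp : HasDerivAt (fun s => ε * Real.exp (K * s))
        (ε * (Real.exp (K * t₀) * K)) t₀ := by
      have h := (((Real.hasDerivAt_exp (K * t₀)).comp t₀
        ((hasDerivAt_id t₀).const_mul K)).const_mul ε)
      simpa [Function.comp] using h
    have hderiv : HasDerivAt (fun s => w s i₀)
        ((A t₀).mulVec (x t₀) i₀ + ε * (Real.exp (K * t₀) * K)) t₀ :=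
      (hxode t₀ ht₀Icc i₀).add hexp
    set d : ℝ := (A t₀).mulVec (x t₀) i₀ + ε * (Real.exp (K * t₀) * K) with hd
    have hE : (0:ℝ) < Real.exp (K * t₀) := Real.exp_pos _
    -- d > 0
    have hsumw : 0 ≤ ∑ j, A t₀ i₀ j * w t₀ j := by
      refine Finset.sum_nonneg fun j _ => ?_
      rcases eq_or_ne i₀ j with h | h
      · rw [← h, ht₀eq, mul_zero]
      · exact mul_nonneg (hMetzler t₀ i₀ j h) (ht₀nonneg j)
    have hmv : (A t₀).mulVec (x t₀) i₀
        = ∑ j, A t₀ i₀ j * w t₀ j - (∑ j, A t₀ i₀ j) * (ε * Real.exp (K * t₀)) := by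
      simp only [Matrix.mulVec, dotProduct, hw]
      rw [Finset.sum_mul, ← Finset.sum_sub_distrib]
      exact Finset.sum_congr rfl fun j _ => by ring
    have hrs := hrow t₀ ht₀Icc i₀
    have hd_pos : 0 < d := by
      rw [hd, hmv]
      have hεE : 0 < ε * Real.exp (K * t₀) := mul_pos hε hE
      nlinarith [mul_le_mul_of_nonneg_right hrs (le_of_lt hεE)]
    -- d ≤ 0 from left slope
    have hslope := hasDerivAt_iff_tendsto_slope.mp hderiv
    have htend2 : Tendsto (slope (fun s => w s i₀) t₀) (nhdsWithin t₀ (Set.Iio t₀)) (nhds d) :=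
      hslope.mono_left (nhdsWithin_mono _ fun s hs => ne_of_lt hs)
    have hev : ∀ᶠ s in nhdsWithin t₀ (Set.Iio t₀), slope (fun s => w s i₀) t₀ s ≤ 0 := by
      filter_upwards [Ioo_mem_nhdsLT_of_mem (⟨ht₀pos, le_rfl⟩ : t₀ ∈ Set.Ioc 0 t₀)] with s hs
      have hwpos : 0 < w s i₀ := hbefore s (hIoosub hs) hs.2 i₀
      rw [slope_def_field, ht₀eq, sub_zero]
      apply div_nonpos_of_nonneg_of_nonpos (le_of_lt hwpos)
      linarith [hs.2]
    have hd_le : d ≤ 0 := le_of_tendsto htend2 hev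
    linarith
  -- conclude
  by_contra hneg
  push_neg at hneg
  have hEpos : (0:ℝ) < Real.exp (K * t) := Real.exp_pos _
  have hεpos : 0 < (-x t i) / (2 * Real.exp (K * t)) := div_pos (by linarith) (by positivity)
  have h1 := main _ hεpos t ht i
  have h2 : (-x t i) / (2 * Real.exp (K * t)) * Real.exp (K * t) = -x t i / 2 := by
    field_simp
  rw [h2] at h1
  linarith

/-- If x solves x'(t) = A(t)x(t) with A(t) Metzler and x(0) ≥ 0, and ζ is
differentiable with ζ(0) > 0 componentwise and ζ'(τ)ᵀ + ζ(τ)ᵀA(τ) ≤ 0 componentwise,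
then V(τ) := ζ(τ)ᵀx(τ) is nonincreasing on [0,T]. -/
theorem stmt7 {n : ℕ} (T : ℝ)
    (A : ℝ → Matrix (Fin n) (Fin n) ℝ)
    (hAcont : ∀ i j, Continuous fun τ => A τ i j)
    (hMetzler : ∀ τ, ∀ i j, i ≠ j → 0 ≤ A τ i j)
    (x : ℝ → Fin n → ℝ)
    (hxode : ∀ t ∈ Set.Icc (0 : ℝ) T, ∀ i,
      HasDerivAt (fun s => x s i) ((A t).mulVec (x t) i) t)
    (hx0 : ∀ i, 0 ≤ x 0 i)
    (ζ ζ' : ℝ → Fin n → ℝ)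
    (hζ : ∀ τ ∈ Set.Icc (0 : ℝ) T, ∀ j, HasDerivAt (fun t => ζ t j) (ζ' τ j) τ)
    (hζ0 : ∀ j, 0 < ζ 0 j)
    (hineq : ∀ τ ∈ Set.Icc (0 : ℝ) T, ∀ j, ζ' τ j + Matrix.vecMul (ζ τ) (A τ) j ≤ 0) :
    AntitoneOn (fun τ => dotProduct (ζ τ) (x τ)) (Set.Icc (0 : ℝ) T) := by
  have hxnn := xnonneg T A hAcont hMetzler x hxode hx0
  have hV : ∀ τ ∈ Set.Icc (0:ℝ) T, HasDerivAt (fun s => dotProduct (ζ s) (x s))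
      (∑ j, (ζ' τ j * x τ j + ζ τ j * (A τ).mulVec (x τ) j)) τ := by
    intro τ hτ
    have h := HasDerivAt.fun_sum (u := Finset.univ)
      (A := fun j s => ζ s j * x s j)
      (A' := fun j => ζ' τ j * x τ j + ζ τ j * (A τ).mulVec (x τ) j)
      (fun j _ => (hζ τ hτ j).mul (hxode τ hτ j))
    simpa [dotProduct] using h
  have hnonpos : ∀ τ ∈ Set.Icc (0:ℝ) T,
      (∑ j, (ζ' τ j * x τ j + ζ τ j * (A τ).mulVec (x τ) j)) ≤ 0 := by
    intro τ hτ
    have heq : (∑ j, (ζ' τ j * x τ j + ζ τ j * (A τ).mulVec (x τ) j))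
        = ∑ j, (ζ' τ j + Matrix.vecMul (ζ τ) (A τ) j) * x τ j := by
      have h2 : ∑ j, ζ τ j * (A τ).mulVec (x τ) j
          = ∑ j, Matrix.vecMul (ζ τ) (A τ) j * x τ j := by
        have h3 := Matrix.dotProduct_mulVec (ζ τ) (A τ) (x τ)
        simpa [dotProduct] using h3
      rw [Finset.sum_add_distrib, h2, ← Finset.sum_add_distrib]
      exact Finset.sum_congr rfl fun j _ => by ring
    rw [heq]
    exact Finset.sum_nonpos fun j _ =>
      mul_nonpos_of_nonpos_of_nonneg (hineq τ hτ j) (hxnn τ hτ j)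
  apply antitoneOn_of_deriv_nonpos (convex_Icc 0 T)
  · exact fun τ hτ => (hV τ hτ).continuousAt.continuousWithinAt
  · intro τ hτ
    rw [interior_Icc] at hτ
    exact ((hV τ (Set.Ioo_subset_Icc_self hτ)).differentiableAt).differentiableWithinAt
  · intro τ hτ
    rw [interior_Icc] at hτ
    rw [(hV τ (Set.Ioo_subset_Icc_self hτ)).deriv]
    exact hnonpos τ (Set.Ioo_subset_Icc_self hτ)
end

section
/- (Range dwell-time equivalence, direction (a)⇒(b)) Suppose A(τ) is Metzler for τ ∈ [0,Tmax], J ≥ 0, and there exists λ > 0 with λᵀ(J − Φ(θ)⁻¹) < 0 for all θ ∈ [Tmin,Tmax], where Φ(θ) = Ψ(θ,0). Then ζ*(τ) := (Ψ(τ,0)⁻¹)ᵀ λ satisfies ζ*(0) = λ > 0, (ζ*)'(τ)ᵀ + ζ*(τ)ᵀA(τ) = 0, and there exists ε > 0 with ζ*(0)ᵀJ − ζ*(θ)ᵀ + ε𝟙ᵀ ≤ 0 for all θ ∈ [Tmin,Tmax]. -/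
open Matrix Set

attribute [local instance] Matrix.linftyOpNormedAddCommGroup Matrix.linftyOpNormedSpace
  Matrix.linftyOpNormedRing Matrix.linftyOpNormedAlgebra

namespace Stmt9Aux

variable {n : ℕ}

def entryLM (i j : Fin n) : Matrix (Fin n) (Fin n) ℝ →ₗ[ℝ] ℝ where
  toFun M := M i j
  map_add' _ _ := rfl
  map_smul' _ _ := rfl

theorem hasDerivAt_matrix {F : ℝ → Matrix (Fin n) (Fin n) ℝ}
    {M : Matrix (Fin n) (Fin n) ℝ} {τ : ℝ} :
    HasDerivAt F M τ ↔ ∀ i j, HasDerivAt (fun t => F t i j) (M i j) τ := by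
  constructor
  · intro h i j
    have hL := ((entryLM (n := n) i j).toContinuousLinearMap.hasFDerivAt
      (x := F τ)).comp_hasDerivAt τ h
    exact hL
  · intro h
    have e1 : ∀ (G : Matrix (Fin n) (Fin n) ℝ),
        ∑ i : Fin n, ∑ j : Fin n, (G i j) • Matrix.single i j (1 : ℝ) = G := by
      intro G
      conv_rhs => rw [matrix_eq_sum_single G]
      refine Finset.sum_congr rfl fun i _ => Finset.sum_congr rfl fun j _ => ?_
      rw [smul_single, smul_eq_mul, mul_one]
    have key : HasDerivAt (fun t => ∑ i : Fin n, ∑ j : Fin n, (F t i j) • Matrix.single i j (1:ℝ))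
        (∑ i : Fin n, ∑ j : Fin n, (M i j) • Matrix.single i j (1:ℝ)) τ :=
      HasDerivAt.fun_sum fun i _ => HasDerivAt.fun_sum fun j _ => (h i j).smul_const _
    have : (fun t => ∑ i : Fin n, ∑ j : Fin n, (F t i j) • Matrix.single i j (1:ℝ)) = F :=
      funext fun t => e1 (F t)
    rwa [this, e1] at key

theorem isUnit_aux (A : ℝ → Matrix (Fin n) (Fin n) ℝ)
    (hAcont : ∀ i j, Continuous fun τ => A τ i j)
    (Ψ : ℝ → ℝ → Matrix (Fin n) (Fin n) ℝ)
    (hode : ∀ s τ i j, HasDerivAt (fun t => Ψ t s i j) ((A τ * Ψ τ s) i j) τ)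
    (hinit : ∀ s, Ψ s s = 1) (τ₀ : ℝ) (hτ₀ : 0 ≤ τ₀) : IsUnit (Ψ τ₀ 0) := by
  rcases eq_or_lt_of_le hτ₀ with h0 | h0
  · rw [← h0, hinit]; exact isUnit_one
  by_contra hu
  have hdet : (Ψ τ₀ 0).det = 0 := by
    by_contra hd
    exact hu ((Matrix.isUnit_iff_isUnit_det _).2 (isUnit_iff_ne_zero.2 hd))
  obtain ⟨w, hw0, hww⟩ := (Matrix.exists_mulVec_eq_zero_iff).2 hdet
  set f : ℝ → (Fin n → ℝ) := fun t => Ψ t 0 *ᵥ w with hf_def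
  have hf : ∀ t, HasDerivAt f ((A t * Ψ t 0) *ᵥ w) t := by
    intro t
    rw [hasDerivAt_pi]
    intro i
    have : HasDerivAt (fun u => ∑ j, Ψ u 0 i j * w j) (∑ j, (A t * Ψ t 0) i j * w j) t :=
      HasDerivAt.fun_sum fun j _ => (hode 0 t i j).mul_const (w j)
    simpa [hf_def, Matrix.mulVec, dotProduct] using this
  obtain ⟨C, hC⟩ := (isCompact_Icc (a := (0:ℝ)) (b := τ₀)).exists_bound_of_continuousOn
    (f := fun t => ∑ i : Fin n, ∑ j : Fin n, |A t i j|)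
    (by fun_prop)
  have hCb : ∀ t ∈ Icc (0:ℝ) τ₀, ∑ i : Fin n, ∑ j : Fin n, |A t i j| ≤ C := by
    intro t ht
    have := hC t ht
    exact (le_abs_self _).trans (by simpa [Real.norm_eq_abs] using this)
  have hC0 : 0 ≤ C := by
    have := hCb 0 ⟨le_refl _, hτ₀⟩
    exact le_trans (Finset.sum_nonneg fun i _ => Finset.sum_nonneg fun j _ => abs_nonneg _) this
  set p : ℝ → ℝ := fun t => max 0 (min t τ₀) with hp_def
  have hp_mem : ∀ t, p t ∈ Icc (0:ℝ) τ₀ := fun t =>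
    ⟨le_max_left _ _, max_le hτ₀ (min_le_right _ _)⟩
  have hp_eq : ∀ t ∈ Icc (0:ℝ) τ₀, p t = t := by
    intro t ht
    simp [hp_def, min_eq_left ht.2, max_eq_right ht.1]
  set v : ℝ → (Fin n → ℝ) → (Fin n → ℝ) := fun t x => A (p t) *ᵥ x with hv_def
  have hlip : ∀ t, LipschitzOnWith C.toNNReal (v t) univ := by
    intro t
    apply LipschitzWith.lipschitzOnWith
    apply LipschitzWith.of_dist_le_mul
    intro x y
    rw [dist_eq_norm, dist_eq_norm, ← Matrix.mulVec_sub]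
    set z := x - y
    have hz : ‖A (p t) *ᵥ z‖ ≤ C * ‖z‖ := by
      rw [pi_norm_le_iff_of_nonneg (by positivity)]
      intro i
      have h1 : ‖(A (p t) *ᵥ z) i‖ = |∑ j, A (p t) i j * z j| := rfl
      rw [h1]
      calc |∑ j, A (p t) i j * z j| ≤ ∑ j, |A (p t) i j * z j| :=
            Finset.abs_sum_le_sum_abs _ _
        _ ≤ ∑ j, |A (p t) i j| * ‖z‖ := by
            refine Finset.sum_le_sum fun j _ => ?_
            rw [abs_mul]
            exact mul_le_mul_of_nonneg_left (norm_le_pi_norm z j) (abs_nonneg _)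
        _ = (∑ j, |A (p t) i j|) * ‖z‖ := by rw [Finset.sum_mul]
        _ ≤ C * ‖z‖ := by
            refine mul_le_mul_of_nonneg_right ?_ (norm_nonneg _)
            refine le_trans ?_ (hCb _ (hp_mem t))
            exact Finset.single_le_sum (f := fun i => ∑ j, |A (p t) i j|)
              (fun i _ => Finset.sum_nonneg fun j _ => abs_nonneg _) (Finset.mem_univ i)
    calc ‖A (p t) *ᵥ z‖ ≤ C * ‖z‖ := hz
      _ ≤ C.toNNReal * ‖z‖ :=
          mul_le_mul_of_nonneg_right (Real.le_coe_toNNReal C) (norm_nonneg _)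
  have key : EqOn f (fun _ => (0 : Fin n → ℝ)) (Icc 0 τ₀) := by
    apply ODE_solution_unique_of_mem_Icc_left (fun t _ => hlip t)
    · exact fun t _ => (hf t).continuousAt.continuousWithinAt
    · intro t ht
      have : v t (f t) = (A t * Ψ t 0) *ᵥ w := by
        rw [hv_def]
        simp only
        rw [hp_eq t ⟨le_of_lt ht.1, ht.2⟩, hf_def]
        simp [Matrix.mulVec_mulVec]
      rw [this]
      exact (hf t).hasDerivWithinAt
    · exact fun t _ => mem_univ _
    · exact continuousOn_const
    · intro t ht
      have : v t 0 = 0 := by simp [hv_def]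
      rw [this]
      exact hasDerivWithinAt_const _ _ _
    · exact fun t _ => mem_univ _
    · simpa [hf_def] using hww
  have : f 0 = 0 := key ⟨le_refl _, hτ₀⟩
  rw [hf_def] at this
  simp only [hinit 0, Matrix.one_mulVec] at this
  exact hw0 this

theorem hasDerivAt_inv_aux (A : ℝ → Matrix (Fin n) (Fin n) ℝ)
    (Ψ : ℝ → ℝ → Matrix (Fin n) (Fin n) ℝ)
    (hode : ∀ s τ i j, HasDerivAt (fun t => Ψ t s i j) ((A τ * Ψ τ s) i j) τ)
    (τ : ℝ) (hu : IsUnit (Ψ τ 0)) :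
    HasDerivAt (fun t => (Ψ t 0)⁻¹) (-((Ψ τ 0)⁻¹ * A τ)) τ := by
  have hF : HasDerivAt (fun t => Ψ t 0) (A τ * Ψ τ 0) τ :=
    hasDerivAt_matrix.2 fun i j => hode 0 τ i j
  have hinv := hasFDerivAt_ringInverse (𝕜 := ℝ) hu.unit
  rw [hu.unit_spec] at hinv
  have hcomp := hinv.comp_hasDerivAt τ hF
  have hfun : (fun t => Ring.inverse (Ψ t 0)) = fun t => (Ψ t 0)⁻¹ :=
    funext fun t => (Matrix.nonsing_inv_eq_ringInverse _).symm
  rw [Function.comp_def, hfun] at hcomp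
  refine hcomp.congr_deriv ?_
  symm
  have hc : (↑hu.unit⁻¹ : Matrix (Fin n) (Fin n) ℝ) = (Ψ τ 0)⁻¹ := by
    rw [Matrix.coe_units_inv, hu.unit_spec]
  simp only [ContinuousLinearMap.neg_apply, ContinuousLinearMap.mulLeftRight_apply, hc]
  rw [neg_inj]
  rw [mul_assoc, mul_assoc, Matrix.mul_nonsing_inv _ ((Matrix.isUnit_iff_isUnit_det _).1 hu),
    mul_one]

end Stmt9Aux

/-- Range dwell-time, (a)⇒(b): If A is Metzler on [0,Tmax], J ≥ 0, and
there exists λ > 0 with λᵀ(J − Φ(θ)⁻¹) < 0 componentwise for all θ ∈ [Tmin,Tmax] where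
Φ(θ) = Ψ(θ,0), then ζ*(τ) := (Ψ(τ,0)⁻¹)ᵀλ satisfies ζ*(0) = λ > 0,
(ζ*)'(τ)ᵀ + ζ*(τ)ᵀA(τ) = 0, and there exists ε > 0 with
ζ*(0)ᵀJ − ζ*(θ)ᵀ + ε𝟙ᵀ ≤ 0 for all θ ∈ [Tmin,Tmax]. -/
theorem stmt9 {n : ℕ} (Tmin Tmax : ℝ) (hT : 0 < Tmin) (hTT : Tmin ≤ Tmax)
    (A : ℝ → Matrix (Fin n) (Fin n) ℝ)
    (hAcont : ∀ i j, Continuous fun τ => A τ i j)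
    (hMetzler : ∀ τ ∈ Set.Icc (0 : ℝ) Tmax, ∀ i j, i ≠ j → 0 ≤ A τ i j)
    (J : Matrix (Fin n) (Fin n) ℝ) (hJ : ∀ i j, 0 ≤ J i j)
    (Ψ : ℝ → ℝ → Matrix (Fin n) (Fin n) ℝ)
    (hode : ∀ s τ i j, HasDerivAt (fun t => Ψ t s i j) ((A τ * Ψ τ s) i j) τ)
    (hinit : ∀ s, Ψ s s = 1)
    (lam : Fin n → ℝ) (hlam : ∀ j, 0 < lam j)
    (ha : ∀ θ ∈ Set.Icc Tmin Tmax, ∀ j, Matrix.vecMul lam (J - (Ψ θ 0)⁻¹) j < 0) :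
    (∀ j, Matrix.vecMul lam ((Ψ 0 0)⁻¹) j = lam j) ∧
    (∀ τ ∈ Set.Icc (0 : ℝ) Tmax, ∀ j,
      HasDerivAt (fun t => Matrix.vecMul lam ((Ψ t 0)⁻¹) j)
        (-(Matrix.vecMul (Matrix.vecMul lam ((Ψ τ 0)⁻¹)) (A τ)) j) τ) ∧
    (∃ ε > 0, ∀ θ ∈ Set.Icc Tmin Tmax, ∀ j,
      Matrix.vecMul (Matrix.vecMul lam ((Ψ 0 0)⁻¹)) J j
        - Matrix.vecMul lam ((Ψ θ 0)⁻¹) j + ε ≤ 0) := by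
  have hpart1 : ∀ j, Matrix.vecMul lam ((Ψ 0 0)⁻¹) j = lam j := by
    intro j
    rw [hinit 0, Matrix.nonsing_inv_eq_ringInverse, Ring.inverse_one, Matrix.vecMul_one]
  have hpart2 : ∀ τ ∈ Set.Icc (0 : ℝ) Tmax, ∀ j,
      HasDerivAt (fun t => Matrix.vecMul lam ((Ψ t 0)⁻¹) j)
        (-(Matrix.vecMul (Matrix.vecMul lam ((Ψ τ 0)⁻¹)) (A τ)) j) τ := by
    intro τ hτ j
    have hu := Stmt9Aux.isUnit_aux A hAcont Ψ hode hinit τ hτ.1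
    have hZ := Stmt9Aux.hasDerivAt_inv_aux A Ψ hode τ hu
    have hsum : HasDerivAt (fun t => ∑ i, lam i * (Ψ t 0)⁻¹ i j)
        (∑ i, lam i * (-((Ψ τ 0)⁻¹ * A τ)) i j) τ :=
      HasDerivAt.fun_sum fun i _ => ((Stmt9Aux.hasDerivAt_matrix.1 hZ) i j).const_mul (lam i)
    have hfun : (fun t => Matrix.vecMul lam ((Ψ t 0)⁻¹) j)
        = fun t => ∑ i, lam i * (Ψ t 0)⁻¹ i j := by
      funext t
      simp [Matrix.vecMul, dotProduct]
    have hval : -(Matrix.vecMul (Matrix.vecMul lam ((Ψ τ 0)⁻¹)) (A τ)) j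
        = ∑ i, lam i * (-((Ψ τ 0)⁻¹ * A τ)) i j := by
      rw [Matrix.vecMul_vecMul]
      simp [Matrix.vecMul, dotProduct, mul_neg, Finset.sum_neg_distrib]
    rw [hfun, hval]
    exact hsum
  refine ⟨hpart1, hpart2, ?_⟩
  have hzero : Matrix.vecMul lam ((Ψ 0 0)⁻¹) = lam := funext hpart1
  have hsub : ∀ θ (j : Fin n), Matrix.vecMul lam (J - (Ψ θ 0)⁻¹) j
      = Matrix.vecMul lam J j - Matrix.vecMul lam ((Ψ θ 0)⁻¹) j := by
    intro θ j
    simp [Matrix.vecMul, dotProduct, Matrix.sub_apply, mul_sub, Finset.sum_sub_distrib]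
  have H : ∀ j : Fin n, ∃ e : ℝ, 0 < e ∧ ∀ θ ∈ Set.Icc Tmin Tmax,
      Matrix.vecMul lam J j - Matrix.vecMul lam ((Ψ θ 0)⁻¹) j ≤ -e := by
    intro j
    have hcont : ContinuousOn
        (fun θ => Matrix.vecMul lam J j - Matrix.vecMul lam ((Ψ θ 0)⁻¹) j)
        (Set.Icc Tmin Tmax) := by
      intro θ hθ
      have hθ' : θ ∈ Set.Icc (0:ℝ) Tmax := ⟨le_trans hT.le hθ.1, hθ.2⟩
      exact (continuousAt_const.sub (hpart2 θ hθ' j).continuousAt).continuousWithinAt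
    obtain ⟨θ₀, hθ₀, hmax⟩ := isCompact_Icc.exists_isMaxOn
      (Set.nonempty_Icc.2 hTT) hcont
    refine ⟨-(Matrix.vecMul lam J j - Matrix.vecMul lam ((Ψ θ₀ 0)⁻¹) j), ?_, ?_⟩
    · have := ha θ₀ hθ₀ j
      rw [hsub] at this
      linarith
    · intro θ hθ
      have := hmax hθ
      simpa using this
  choose e he1 he2 using H
  rcases isEmpty_or_nonempty (Fin n) with hn | hn
  · exact ⟨1, one_pos, fun θ hθ j => isEmptyElim j⟩
  · refine ⟨Finset.univ.inf' Finset.univ_nonempty e, ?_, ?_⟩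
    · exact (Finset.lt_inf'_iff _).2 fun j _ => he1 j
    · intro θ hθ j
      have h1 := he2 j θ hθ
      have h2 : Finset.univ.inf' Finset.univ_nonempty e ≤ e j :=
        Finset.inf'_le _ (Finset.mem_univ j)
      rw [hzero]
      linarith
end

section
/- (Minimum dwell-time, (b)⇒(a)) Suppose A(τ) is Metzler for all τ ∈ [0,T̄], J is entrywise nonnegative, and there exist a differentiable ζ : [0,T̄] → ℝⁿ with ζ(T̄) > 0 and ε > 0 such that: ζ(T̄)ᵀA(T̄) + ε𝟙ᵀ ≤ 0, ζ'(τ)ᵀ + ζ(τ)ᵀA(τ) ≤ 0 for all τ ∈ [0,T̄], and ζ(0)ᵀJ − ζ(T̄)ᵀ + ε𝟙ᵀ ≤ 0. Then with λ := ζ(T̄) > 0 and Φ(T̄) := Ψ(T̄,0), one has λᵀA(T̄) < 0 and λᵀ(Φ(T̄)J − I) < 0 componentwise. -/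
open Matrix Finset Filter Topology Set

/-- Nonnegativity of the state-transition matrix of a Metzler system. -/
lemma psi_nonneg_aux {n : ℕ} {Tbar : ℝ} (hT : 0 < Tbar)
    {A : ℝ → Matrix (Fin n) (Fin n) ℝ}
    (hAcont : ∀ i j, Continuous fun τ => A τ i j)
    (hMetzler : ∀ τ ∈ Set.Icc (0 : ℝ) Tbar, ∀ i j, i ≠ j → 0 ≤ A τ i j)
    {Ψ : ℝ → ℝ → Matrix (Fin n) (Fin n) ℝ}
    (hode : ∀ s τ i j, HasDerivAt (fun t => Ψ t s i j) ((A τ * Ψ τ s) i j) τ)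
    (hinit : ∀ s, Ψ s s = 1) :
    ∀ t ∈ Set.Icc (0:ℝ) Tbar, ∀ i j, 0 ≤ Ψ t 0 i j := by
  classical
  obtain ⟨C, hCn⟩ := (isCompact_Icc (a := (0:ℝ)) (b := Tbar)).exists_bound_of_continuousOn
      (f := fun τ => (fun p => A τ p.1 p.2 : Fin n × Fin n → ℝ))
      (Continuous.continuousOn (continuous_pi fun p => hAcont p.1 p.2))
  have habs : ∀ τ ∈ Set.Icc (0:ℝ) Tbar, ∀ i m, |A τ i m| ≤ C := by
    intro τ hτ i m
    calc |A τ i m| = ‖A τ i m‖ := (Real.norm_eq_abs _).symm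
      _ ≤ ‖(fun p => A τ p.1 p.2 : Fin n × Fin n → ℝ)‖ := by
            simpa using norm_le_pi_norm (fun p : Fin n × Fin n => A τ p.1 p.2) (i, m)
      _ ≤ C := hCn τ hτ
  set Cc : ℝ := n * C + 1 with hCc
  have hrow : ∀ τ ∈ Set.Icc (0:ℝ) Tbar, ∀ i, (∑ m, A τ i m) ≤ (n : ℝ) * C := by
    intro τ hτ i
    calc (∑ m, A τ i m) ≤ ∑ m, |A τ i m| := Finset.sum_le_sum fun m _ => le_abs_self _
      _ ≤ ∑ _m : Fin n, C := Finset.sum_le_sum fun m _ => habs τ hτ i m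
      _ = (n : ℝ) * C := by simp [mul_comm]
  suffices h : ∀ δ > (0:ℝ), ∀ j, ∀ t ∈ Set.Icc (0:ℝ) Tbar, ∀ i,
      0 < Ψ t 0 i j + δ * Real.exp (Cc * t) by
    intro t ht i j
    by_contra hneg
    push_neg at hneg
    have hexp : 0 < Real.exp (Cc * t) := Real.exp_pos _
    have hδ : 0 < -Ψ t 0 i j / Real.exp (Cc * t) := div_pos (by linarith) hexp
    have hkey := h _ hδ j t ht i
    rw [div_mul_cancel₀ _ hexp.ne'] at hkey
    linarith
  intro δ hδ j
  by_contra hcon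
  push_neg at hcon
  obtain ⟨t₁, ht₁, i₁, hi₁⟩ := hcon
  set y : Fin n → ℝ → ℝ := fun i t => Ψ t 0 i j + δ * Real.exp (Cc * t) with hy
  have hy' : ∀ i τ, HasDerivAt (y i)
      ((A τ * Ψ τ 0) i j + δ * Real.exp (Cc * τ) * Cc) τ := by
    intro i τ
    have h2 : HasDerivAt (fun t => δ * Real.exp (Cc * t))
        (δ * Real.exp (Cc * τ) * Cc) τ := by
      have := ((Real.hasDerivAt_exp (Cc * τ)).comp τ
        ((hasDerivAt_id τ).const_mul Cc)).const_mul δ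
      exact this.congr_deriv (by ring)
    exact (hode 0 τ i j).add h2
  have hycont : ∀ i, Continuous (y i) := by
    intro i
    exact (Differentiable.continuous fun τ => (hy' i τ).differentiableAt)
  set S : Set ℝ := {t | t ∈ Set.Icc (0:ℝ) Tbar ∧ ∃ i, y i t ≤ 0} with hSdef
  have hSne : S.Nonempty := ⟨t₁, ht₁, i₁, hi₁⟩
  have hSclosed : IsClosed S := by
    have hrw : S = Set.Icc 0 Tbar ∩ ⋃ i, {t | y i t ≤ 0} := by
      ext t
      simp [hSdef, Set.mem_iUnion]
    rw [hrw]
    exact isClosed_Icc.inter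
      (isClosed_iUnion_of_finite fun i => isClosed_le (hycont i) continuous_const)
  have hSbdd : BddBelow S := ⟨0, fun t ht => ht.1.1⟩
  set t₀ := sInf S with ht₀def
  have ht₀S : t₀ ∈ S := hSclosed.csInf_mem hSne hSbdd
  obtain ⟨ht₀Icc, i, hi⟩ := ht₀S
  have hy0 : ∀ m, 0 < y m 0 := by
    intro m
    have h1 : (0:ℝ) ≤ Ψ 0 0 m j := by
      rw [hinit 0]
      by_cases h : m = j <;> simp [Matrix.one_apply, h]
    have h2 : 0 < Real.exp (Cc * 0) := Real.exp_pos _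
    simp only [hy]
    nlinarith
  have ht₀pos : 0 < t₀ := by
    rcases lt_or_eq_of_le ht₀Icc.1 with h | h
    · exact h
    · exfalso
      rw [← h] at hi
      linarith [hy0 i]
  have hpre : ∀ t, 0 ≤ t → t < t₀ → ∀ m, 0 < y m t := by
    intro t h0 hlt m
    by_contra hle
    push_neg at hle
    have htIcc : t ∈ Set.Icc (0:ℝ) Tbar := ⟨h0, hlt.le.trans ht₀Icc.2⟩
    have hmem : t ∈ S := ⟨htIcc, m, hle⟩
    exact absurd (csInf_le hSbdd hmem) (not_le.mpr hlt)
  have hIoomem : Set.Ioo (0:ℝ) t₀ ∈ 𝓝[<] t₀ := Ioo_mem_nhdsLT_of_mem ⟨ht₀pos, le_rfl⟩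
  have hynn : ∀ m, 0 ≤ y m t₀ := by
    intro m
    have htend : Tendsto (y m) (𝓝[<] t₀) (𝓝 (y m t₀)) :=
      ((hycont m).tendsto t₀).mono_left nhdsWithin_le_nhds
    refine ge_of_tendsto htend ?_
    filter_upwards [hIoomem] with t ht
    exact (hpre t ht.1.le ht.2 m).le
  have hyzero : y i t₀ = 0 := le_antisymm hi (hynn i)
  have hxval : ∀ m, Ψ t₀ 0 m j = y m t₀ - δ * Real.exp (Cc * t₀) := by
    intro m; simp [hy]
  have hdpos : 0 < (A t₀ * Ψ t₀ 0) i j + δ * Real.exp (Cc * t₀) * Cc := by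
    have hE : 0 < Real.exp (Cc * t₀) := Real.exp_pos _
    have hsum : (A t₀ * Ψ t₀ 0) i j
        = (∑ m, A t₀ i m * y m t₀) - δ * Real.exp (Cc * t₀) * (∑ m, A t₀ i m) := by
      rw [Matrix.mul_apply]
      simp only [hxval, mul_sub]
      rw [Finset.sum_sub_distrib, ← Finset.sum_mul]
      ring
    have hterm : 0 ≤ ∑ m, A t₀ i m * y m t₀ := by
      apply Finset.sum_nonneg
      intro m _
      by_cases hmi : m = i
      · rw [hmi, hyzero, mul_zero]
      · exact mul_nonneg (hMetzler t₀ ht₀Icc i m fun hc => hmi hc.symm) (hynn m)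
    have hrb := hrow t₀ ht₀Icc i
    have hP : 0 < δ * Real.exp (Cc * t₀) := by positivity
    have h1 : δ * Real.exp (Cc * t₀) * (∑ m, A t₀ i m)
        ≤ δ * Real.exp (Cc * t₀) * ((n:ℝ) * C) :=
      mul_le_mul_of_nonneg_left hrb hP.le
    have h2 : δ * Real.exp (Cc * t₀) * Cc
        = δ * Real.exp (Cc * t₀) * ((n:ℝ) * C) + δ * Real.exp (Cc * t₀) := by
      rw [hCc]; ring
    rw [hsum]
    linarith
  have hslope := hasDerivAt_iff_tendsto_slope.mp (hy' i t₀)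
  have hfrac : ∀ᶠ t in 𝓝[≠] t₀, 0 < slope (y i) t₀ t :=
    hslope.eventually (eventually_gt_nhds hdpos)
  have hfrac' : ∀ᶠ t in 𝓝[<] t₀, 0 < slope (y i) t₀ t :=
    hfrac.filter_mono (nhdsWithin_mono _ fun x hx => ne_of_lt hx)
  obtain ⟨t, hsl, ht⟩ := (hfrac'.and (eventually_of_mem hIoomem fun t ht => ht)).exists
  have hlt : t < t₀ := ht.2
  rw [slope_def_field] at hsl
  have hden : t - t₀ < 0 := by linarith
  have hnum : y i t - y i t₀ < 0 := by
    by_contra hge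
    push_neg at hge
    have : (y i t - y i t₀) / (t - t₀) ≤ 0 :=
      div_nonpos_of_nonneg_of_nonpos hge hden.le
    linarith
  rw [hyzero] at hnum
  have := hpre t ht.1.le hlt i
  linarith

/-- Minimum dwell-time, (b)⇒(a): If A is Metzler on [0,T̄], J ≥ 0, and
there exist differentiable ζ with ζ(T̄) > 0 and ε > 0 such that ζ(T̄)ᵀA(T̄) + ε𝟙ᵀ ≤ 0,
ζ'(τ)ᵀ + ζ(τ)ᵀA(τ) ≤ 0 on [0,T̄], and ζ(0)ᵀJ − ζ(T̄)ᵀ + ε𝟙ᵀ ≤ 0, then with λ := ζ(T̄)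
and Φ(T̄) := Ψ(T̄,0) one has λᵀA(T̄) < 0 and λᵀ(Φ(T̄)J − I) < 0 componentwise. -/
theorem stmt10 {n : ℕ} (Tbar : ℝ) (hT : 0 < Tbar)
    (A : ℝ → Matrix (Fin n) (Fin n) ℝ)
    (hAcont : ∀ i j, Continuous fun τ => A τ i j)
    (hMetzler : ∀ τ ∈ Set.Icc (0 : ℝ) Tbar, ∀ i j, i ≠ j → 0 ≤ A τ i j)
    (J : Matrix (Fin n) (Fin n) ℝ) (hJ : ∀ i j, 0 ≤ J i j)
    (Ψ : ℝ → ℝ → Matrix (Fin n) (Fin n) ℝ)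
    (hode : ∀ s τ i j, HasDerivAt (fun t => Ψ t s i j) ((A τ * Ψ τ s) i j) τ)
    (hinit : ∀ s, Ψ s s = 1)
    (ζ ζ' : ℝ → Fin n → ℝ)
    (hζ : ∀ τ ∈ Set.Icc (0 : ℝ) Tbar, ∀ j, HasDerivAt (fun t => ζ t j) (ζ' τ j) τ)
    (hζT : ∀ j, 0 < ζ Tbar j)
    (ε : ℝ) (hε : 0 < ε)
    (h1 : ∀ j, Matrix.vecMul (ζ Tbar) (A Tbar) j + ε ≤ 0)
    (h2 : ∀ τ ∈ Set.Icc (0 : ℝ) Tbar, ∀ j, ζ' τ j + Matrix.vecMul (ζ τ) (A τ) j ≤ 0)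
    (h3 : ∀ j, Matrix.vecMul (ζ 0) J j - ζ Tbar j + ε ≤ 0) :
    (∀ j, Matrix.vecMul (ζ Tbar) (A Tbar) j < 0) ∧
    (∀ j, Matrix.vecMul (ζ Tbar) (Ψ Tbar 0 * J - 1) j < 0) := by
  have hΨnn := psi_nonneg_aux hT hAcont hMetzler hode hinit
  have hmono : ∀ k, Matrix.vecMul (ζ Tbar) (Ψ Tbar 0) k ≤ ζ 0 k := by
    intro k
    set g : ℝ → ℝ := fun t => ∑ i, ζ t i * Ψ t 0 i k with hg
    have hgderiv : ∀ τ ∈ Set.Icc (0:ℝ) Tbar,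
        HasDerivAt g (∑ i, (ζ' τ i * Ψ τ 0 i k + ζ τ i * (A τ * Ψ τ 0) i k)) τ := by
      intro τ hτ
      exact HasDerivAt.fun_sum fun i _ => (hζ τ hτ i).mul (hode 0 τ i k)
    have hderivle : ∀ τ ∈ Set.Icc (0:ℝ) Tbar,
        (∑ i, (ζ' τ i * Ψ τ 0 i k + ζ τ i * (A τ * Ψ τ 0) i k)) ≤ 0 := by
      intro τ hτ
      have hswap : (∑ i, ζ τ i * (A τ * Ψ τ 0) i k)
          = ∑ m, Matrix.vecMul (ζ τ) (A τ) m * Ψ τ 0 m k := by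
        simp only [Matrix.mul_apply, Matrix.vecMul, dotProduct,
          Finset.mul_sum, Finset.sum_mul, mul_assoc]
        exact Finset.sum_comm
      calc (∑ i, (ζ' τ i * Ψ τ 0 i k + ζ τ i * (A τ * Ψ τ 0) i k))
          = ∑ m, (ζ' τ m + Matrix.vecMul (ζ τ) (A τ) m) * Ψ τ 0 m k := by
            rw [Finset.sum_add_distrib, hswap, ← Finset.sum_add_distrib]
            exact Finset.sum_congr rfl fun m _ => by ring
        _ ≤ 0 := Finset.sum_nonpos fun m _ =>
            mul_nonpos_iff.2 (Or.inr ⟨h2 τ hτ m, hΨnn τ hτ m k⟩)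
    have hcont : ContinuousOn g (Set.Icc 0 Tbar) := fun τ hτ =>
      ((hgderiv τ hτ).continuousAt).continuousWithinAt
    have hanti : AntitoneOn g (Set.Icc 0 Tbar) := by
      apply antitoneOn_of_deriv_nonpos (convex_Icc 0 Tbar) hcont
      · intro τ hτ
        rw [interior_Icc] at hτ
        exact ((hgderiv τ (Set.Ioo_subset_Icc_self hτ)).differentiableAt).differentiableWithinAt
      · intro τ hτ
        rw [interior_Icc] at hτ
        rw [(hgderiv τ (Set.Ioo_subset_Icc_self hτ)).deriv]
        exact hderivle τ (Set.Ioo_subset_Icc_self hτ)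
    have hT0 : g Tbar ≤ g 0 :=
      hanti (Set.left_mem_Icc.2 hT.le) (Set.right_mem_Icc.2 hT.le) hT.le
    have hgT : g Tbar = Matrix.vecMul (ζ Tbar) (Ψ Tbar 0) k := by
      simp [hg, Matrix.vecMul, dotProduct]
    have hg0 : g 0 = ζ 0 k := by
      simp [hg, hinit 0, Matrix.one_apply]
    rw [hgT, hg0] at hT0
    exact hT0
  refine ⟨fun j => by linarith [h1 j], fun j => ?_⟩
  have hexpand : Matrix.vecMul (ζ Tbar) (Ψ Tbar 0 * J - 1) j
      = Matrix.vecMul (Matrix.vecMul (ζ Tbar) (Ψ Tbar 0)) J j - ζ Tbar j := by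
    rw [Matrix.vecMul_sub, Matrix.vecMul_one, Matrix.vecMul_vecMul]
    rfl
  have hle : Matrix.vecMul (Matrix.vecMul (ζ Tbar) (Ψ Tbar 0)) J j
      ≤ Matrix.vecMul (ζ 0) J j := by
    simp only [Matrix.vecMul, dotProduct]
    exact Finset.sum_le_sum fun k _ => mul_le_mul_of_nonneg_right (hmono k) (hJ k j)
  have h3j := h3 j
  rw [hexpand]
  linarith
end

section
/- Suppose ζ : [0,T] → ℝⁿ is differentiable, A(τ) is Metzler, Ec(τ) and Cc, Fc are entrywise nonnegative matrices, and for all τ ∈ [0,T]: ζ'(τ)ᵀ + ζ(τ)ᵀA(τ) + 𝟙ᵀCc ≤ 0 and ζ(τ)ᵀEc(τ) + 𝟙ᵀFc − γ𝟙ᵀ ≤ 0. If x solves x'(τ) = A(τ)x(τ) + Ec(τ)w(τ) with x(τ) ≥ 0 and w(τ) ≥ 0 on [0,T], and z(τ) = Cc x(τ) + Fc w(τ), then for V(τ) := ζ(τ)ᵀx(τ) one has V(T) − V(0) + ∫₀ᵀ (𝟙ᵀz(s) − γ𝟙ᵀw(s)) ds ≤ 0. -/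
open scoped BigOperators

/-- Continuous-time dissipation inequality. If ζ is differentiable and the
two linear-programming inequalities hold on [0,T], and x ≥ 0 solves the positive linear
ODE with nonnegative input w and output z = Cc x + Fc w, then for V(τ) = ζ(τ)ᵀx(τ),
V(T) − V(0) + ∫₀ᵀ (𝟙ᵀz(s) − γ𝟙ᵀw(s)) ds ≤ 0. -/
theorem stmt13 {n p q : ℕ} (T γ : ℝ) (hT : 0 ≤ T) (hγ : 0 < γ)
    (A : ℝ → Matrix (Fin n) (Fin n) ℝ) (Ec : ℝ → Matrix (Fin n) (Fin p) ℝ)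
    (Cc : Matrix (Fin q) (Fin n) ℝ) (Fc : Matrix (Fin q) (Fin p) ℝ)
    (hAcont : ∀ i j, Continuous fun t => A t i j)
    (hEccont : ∀ i j, Continuous fun t => Ec t i j)
    (hMetzler : ∀ t ∈ Set.Icc (0 : ℝ) T, ∀ i j, i ≠ j → 0 ≤ A t i j)
    (hEc : ∀ t ∈ Set.Icc (0 : ℝ) T, ∀ i j, 0 ≤ Ec t i j)
    (hCc : ∀ i j, 0 ≤ Cc i j) (hFc : ∀ i j, 0 ≤ Fc i j)
    (ζ ζ' : ℝ → Fin n → ℝ)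
    (hζ : ∀ τ ∈ Set.Icc (0 : ℝ) T, ∀ j, HasDerivAt (fun t => ζ t j) (ζ' τ j) τ)
    (hineq1 : ∀ τ ∈ Set.Icc (0 : ℝ) T, ∀ j,
      ζ' τ j + Matrix.vecMul (ζ τ) (A τ) j + Matrix.vecMul 1 Cc j ≤ 0)
    (hineq2 : ∀ τ ∈ Set.Icc (0 : ℝ) T, ∀ j,
      Matrix.vecMul (ζ τ) (Ec τ) j + Matrix.vecMul 1 Fc j - γ ≤ 0)
    (x : ℝ → Fin n → ℝ) (w : ℝ → Fin p → ℝ) (z : ℝ → Fin q → ℝ)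
    (hwcont : ∀ i, Continuous fun t => w t i)
    (hxode : ∀ τ ∈ Set.Icc (0 : ℝ) T, ∀ i,
      HasDerivAt (fun s => x s i) (((A τ).mulVec (x τ) + (Ec τ).mulVec (w τ)) i) τ)
    (hxpos : ∀ τ ∈ Set.Icc (0 : ℝ) T, ∀ i, 0 ≤ x τ i)
    (hwpos : ∀ τ ∈ Set.Icc (0 : ℝ) T, ∀ i, 0 ≤ w τ i)
    (hz : ∀ τ, z τ = Cc.mulVec (x τ) + Fc.mulVec (w τ)) :
    dotProduct (ζ T) (x T) - dotProduct (ζ 0) (x 0)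
      + ∫ s in (0 : ℝ)..T, ((∑ i, z s i) - γ * ∑ i, w s i) ≤ 0 := by
  by_cases hT0 : T = 0
  · subst hT0; simp
  have hTpos : 0 < T := lt_of_le_of_ne hT (Ne.symm hT0)
  set g : ℝ → ℝ := fun s => (∑ i, z s i) - γ * ∑ i, w s i with hgdef
  set V : ℝ → ℝ := fun t => dotProduct (ζ t) (x t) with hVdef
  set V' : ℝ → ℝ := fun τ => dotProduct (ζ' τ) (x τ)
      + dotProduct (ζ τ) ((A τ).mulVec (x τ) + (Ec τ).mulVec (w τ)) with hV'def
  -- derivative of V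
  have hVd : ∀ τ ∈ Set.Icc (0:ℝ) T, HasDerivAt V (V' τ) τ := by
    intro τ hτ
    have h : HasDerivAt (fun t => ∑ i, ζ t i * x t i)
        (∑ i, (ζ' τ i * x τ i
          + ζ τ i * (((A τ).mulVec (x τ) + (Ec τ).mulVec (w τ)) i))) τ :=
      HasDerivAt.fun_sum fun i _ => (hζ τ hτ i).mul (hxode τ hτ i)
    have : HasDerivAt V (∑ i, (ζ' τ i * x τ i
          + ζ τ i * (((A τ).mulVec (x τ) + (Ec τ).mulVec (w τ)) i))) τ := by
      convert h using 2 with t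
      rfl
    simpa [hV'def, dotProduct, Finset.sum_add_distrib] using this
  -- continuity of x at points of [0,T]
  have hxc : ∀ τ ∈ Set.Icc (0:ℝ) T, ∀ i, ContinuousAt (fun s => x s i) τ :=
    fun τ hτ i => (hxode τ hτ i).continuousAt
  -- continuity of g at points of [0,T]
  have hgc : ∀ τ ∈ Set.Icc (0:ℝ) T, ContinuousAt g τ := by
    intro τ hτ
    have hwsum : ContinuousAt (fun s => ∑ i, w s i) τ :=
      tendsto_finset_sum _ fun i _ => (hwcont i).continuousAt
    have hzsum : ContinuousAt (fun s => ∑ i, z s i) τ := by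
      have : ContinuousAt (fun s => ∑ i, (Cc.mulVec (x s) + Fc.mulVec (w s)) i) τ := by
        refine tendsto_finset_sum _ fun i _ => ?_
        have h1 : ContinuousAt (fun s => ∑ j, Cc i j * x s j) τ :=
          tendsto_finset_sum _ fun j _ => (continuousAt_const.mul (hxc τ hτ j))
        have h2 : ContinuousAt (fun s => ∑ j, Fc i j * w s j) τ :=
          tendsto_finset_sum _ fun j _ => (continuousAt_const.mul (hwcont j).continuousAt)
        exact h1.fun_add h2
      convert this using 2 with s
      rw [hz s]
    exact hzsum.sub (continuousAt_const.mul hwsum)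
  have hgcon : ContinuousOn g (Set.Icc 0 T) :=
    fun τ hτ => (hgc τ hτ).continuousWithinAt
  have hgint : IntervalIntegrable g MeasureTheory.volume 0 T := by
    apply ContinuousOn.intervalIntegrable
    rwa [Set.uIcc_of_le hT]
  set W : ℝ → ℝ := fun t => V t + ∫ s in (0:ℝ)..t, g s with hWdef
  -- key pointwise inequality
  have hkey : ∀ τ ∈ Set.Icc (0:ℝ) T, V' τ + g τ ≤ 0 := by
    intro τ hτ
    have h1 : dotProduct
        (ζ' τ + Matrix.vecMul (ζ τ) (A τ) + Matrix.vecMul 1 Cc) (x τ) ≤ 0 :=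
      Finset.sum_nonpos fun j _ =>
        mul_nonpos_of_nonpos_of_nonneg (hineq1 τ hτ j) (hxpos τ hτ j)
    have h2 : dotProduct
        (Matrix.vecMul (ζ τ) (Ec τ) + Matrix.vecMul 1 Fc - γ • (1 : Fin p → ℝ)) (w τ) ≤ 0 :=
      Finset.sum_nonpos fun k _ => by
        have := hineq2 τ hτ k
        exact mul_nonpos_of_nonpos_of_nonneg (by simpa using this) (hwpos τ hτ k)
    have heq : V' τ + g τ =
        dotProduct (ζ' τ + Matrix.vecMul (ζ τ) (A τ) + Matrix.vecMul 1 Cc) (x τ)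
        + dotProduct
          (Matrix.vecMul (ζ τ) (Ec τ) + Matrix.vecMul 1 Fc - γ • (1 : Fin p → ℝ)) (w τ) := by
      have hz1 : (∑ i, z τ i) = dotProduct (Matrix.vecMul 1 Cc) (x τ)
          + dotProduct (Matrix.vecMul 1 Fc) (w τ) := by
        rw [hz τ, ← Matrix.dotProduct_mulVec, ← Matrix.dotProduct_mulVec]
        simp [dotProduct, Pi.add_apply, Finset.sum_add_distrib]
      have hw1 : γ * (∑ i, w τ i)
          = dotProduct (γ • (1 : Fin p → ℝ)) (w τ) := by
        simp [dotProduct, Finset.mul_sum]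
      simp only [hV'def, hgdef, dotProduct_add, add_dotProduct,
        sub_dotProduct, Matrix.dotProduct_mulVec, hz1, hw1]
      ring
    linarith [heq ▸ (add_nonpos h1 h2 : _)]
  -- W is antitone on [0,T]
  have hWd : ∀ τ ∈ Set.Ioo (0:ℝ) T, HasDerivAt W (V' τ + g τ) τ := by
    intro τ hτ
    have hτ' : τ ∈ Set.Icc (0:ℝ) T := Set.Ioo_subset_Icc_self hτ
    have hint : IntervalIntegrable g MeasureTheory.volume 0 τ :=
      hgint.mono_set (by
        rw [Set.uIcc_of_le hτ'.1, Set.uIcc_of_le hT]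
        exact Set.Icc_subset_Icc le_rfl hτ'.2)
    have hmeas : StronglyMeasurableAtFilter g (nhds τ) MeasureTheory.volume :=
      ContinuousOn.stronglyMeasurableAtFilter isOpen_Ioo
        (fun s hs => (hgc s (Set.Ioo_subset_Icc_self hs)).continuousWithinAt) τ hτ
    exact (hVd τ hτ').add
      (intervalIntegral.integral_hasDerivAt_right hint hmeas (hgc τ hτ'))
  have hWanti : AntitoneOn W (Set.Icc 0 T) := by
    apply antitoneOn_of_deriv_nonpos (convex_Icc 0 T)
    · refine ContinuousOn.add (fun τ hτ => ((hVd τ hτ).continuousAt).continuousWithinAt) ?_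
      have := intervalIntegral.continuousOn_primitive_interval
        (μ := MeasureTheory.volume) (f := g) (a := 0) (b := T)
        (by rw [Set.uIcc_of_le hT]; exact hgcon.integrableOn_compact isCompact_Icc)
      rwa [Set.uIcc_of_le hT] at this
    · rw [interior_Icc]
      exact fun τ hτ => ((hWd τ hτ).differentiableAt).differentiableWithinAt
    · rw [interior_Icc]
      intro τ hτ
      rw [(hWd τ hτ).deriv]
      exact hkey τ (Set.Ioo_subset_Icc_self hτ)
  have hfin : W T ≤ W 0 :=
    hWanti (Set.left_mem_Icc.mpr hT) (Set.right_mem_Icc.mpr hT) hT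
  have hW0 : W 0 = V 0 := by simp [hWdef]
  have hWT : W T = V T + ∫ s in (0:ℝ)..T, g s := rfl
  rw [hW0, hWT] at hfin
  have : V T - V 0 + ∫ s in (0:ℝ)..T, g s ≤ 0 := by linarith
  simpa [hVdef, hgdef] using this
end
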